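/- The vector -v_D belongs to rec(cl dom f) ∩ rec(cl dom g), i.e., -v_D lies in the recession cone of cl(dom f) and in the recession cone of cl(dom g). -/
import Mathlib


open scoped InnerProductSpace Pointwise Classical
open Filter Topology

noncomputable section

variable {H : Type*} [NormedAddCommGroup H] [InnerProductSpace ℝ H]

/-- The effective domain of an extended-real-valued function. -/
def fdom {α : Type*} (f : α → EReal) : Set α := {x | f x ≠ ⊤}

/-- The Fenchel conjugate `f*(u) = sup_x (⟪x, u⟫ - f x)`. -/
def fconj (f : H → EReal) : H → EReal :=
  fun u => ⨆ x : H, ((⟪x, u⟫_ℝ : ℝ) : EReal) - f x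

/-- The recession function `(rec f)(y) = sup_{x ∈ dom f} (f (x + y) - f x)`. -/
def recFn (f : H → EReal) : H → EReal :=
  fun y => ⨆ x ∈ fdom f, (f (x + y) - f x)

/-- A proper function: never `-∞` and not identically `+∞`. -/
def ProperFn {α : Type*} (f : α → EReal) : Prop := (∀ x, f x ≠ ⊥) ∧ ∃ x, f x ≠ ⊤

/-- Convexity of an extended-real-valued function, via convexity of its epigraph. -/
def ConvexFn (f : H → EReal) : Prop :=
  Convex ℝ {p : H × ℝ | f p.1 ≤ (p.2 : EReal)}

/-- `v` is the element of minimum norm of `S`, i.e. `v = P_S 0`, the metric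
projection of `0` onto `S`. -/
def IsMinNormPoint (S : Set H) (v : H) : Prop := v ∈ S ∧ ∀ w ∈ S, ‖v‖ ≤ ‖w‖

/-- `p` is the metric projection of `x` onto `S`, i.e. `p = P_S x`. -/
def IsProjOn (S : Set H) (x p : H) : Prop := p ∈ S ∧ ∀ w ∈ S, dist x p ≤ dist x w

/-- The polar cone `S° = {u | ∀ x ∈ S, ⟪x, u⟫ ≤ 0}`. -/
def polarCone (s : Set H) : Set H := {u | ∀ x ∈ s, ⟪x, u⟫_ℝ ≤ 0}

/-- The recession cone `rec S = {x | ∀ y ∈ S, x + y ∈ S}`. -/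
def recCone (s : Set H) : Set H := {x | ∀ y ∈ s, x + y ∈ s}

/-- `p = prox_f w`: `p` minimizes `y ↦ f y + ½‖y - w‖²`. -/
def IsProxOf (f : H → EReal) (w p : H) : Prop :=
  ∀ y : H, f p + ((1 / 2 * ‖p - w‖ ^ 2 : ℝ) : EReal) ≤ f y + ((1 / 2 * ‖y - w‖ ^ 2 : ℝ) : EReal)

section Helpers

variable [FiniteDimensional ℝ H]

lemma fconj_ne_bot (f : H → EReal) (hf : ProperFn f) (u : H) : fconj f u ≠ ⊥ := by
  obtain ⟨x0, hx0⟩ := hf.2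
  have hle : ((⟪x0, u⟫_ℝ - (f x0).toReal : ℝ) : EReal) ≤ fconj f u := by
    calc ((⟪x0, u⟫_ℝ - (f x0).toReal : ℝ) : EReal)
        = ((⟪x0, u⟫_ℝ : ℝ) : EReal) - f x0 := by
          rw [EReal.coe_sub, EReal.coe_toReal hx0 (hf.1 x0)]
      _ ≤ fconj f u := le_iSup (fun x : H => ((⟪x, u⟫_ℝ : ℝ) : EReal) - f x) x0
  intro h
  rw [h, le_bot_iff] at hle
  exact EReal.coe_ne_bot _ hle

lemma fconj_le_of_forall (f : H → EReal) (hf : ProperFn f) (u : H) (c : ℝ)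
    (h : ∀ x, f x ≠ ⊤ → ⟪x, u⟫_ℝ - (f x).toReal ≤ c) : fconj f u ≤ (c : EReal) := by
  refine iSup_le fun x => ?_
  by_cases hx : f x = ⊤
  · rw [hx, EReal.sub_top]; exact bot_le
  · rw [← EReal.coe_toReal hx (hf.1 x), ← EReal.coe_sub]
    exact EReal.coe_le_coe_iff.mpr (h x hx)

lemma inner_sub_toReal_le (f : H → EReal) (hf : ProperFn f) {w : H}
    (hw : w ∈ fdom (fconj f)) (x : H) (hx : f x ≠ ⊤) :
    ⟪x, w⟫_ℝ - (f x).toReal ≤ (fconj f w).toReal := by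
  have hbot : fconj f w ≠ ⊥ := fconj_ne_bot f hf w
  have h1 : ((⟪x, w⟫_ℝ - (f x).toReal : ℝ) : EReal) ≤ fconj f w := by
    rw [EReal.coe_sub, EReal.coe_toReal hx (hf.1 x)]
    exact le_iSup (fun x : H => ((⟪x, w⟫_ℝ : ℝ) : EReal) - f x) x
  rw [← EReal.coe_toReal hw hbot] at h1
  exact EReal.coe_le_coe_iff.mp h1

lemma fdom_fconj_convex (f : H → EReal) (hf : ProperFn f) :
    Convex ℝ (fdom (fconj f)) := by
  intro u hu v hv a b ha hb hab
  have key : fconj f (a • u + b • v)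
      ≤ ((a * (fconj f u).toReal + b * (fconj f v).toReal : ℝ) : EReal) := by
    refine fconj_le_of_forall f hf _ _ (fun x hx => ?_)
    have h1 := inner_sub_toReal_le f hf hu x hx
    have h2 := inner_sub_toReal_le f hf hv x hx
    have hin : ⟪x, a • u + b • v⟫_ℝ = a * ⟪x, u⟫_ℝ + b * ⟪x, v⟫_ℝ := by
      rw [inner_add_right, real_inner_smul_right, real_inner_smul_right]
    rw [hin]
    have hr : a * (f x).toReal + b * (f x).toReal = (f x).toReal := by
      rw [← add_mul, hab, one_mul]
    nlinarith [mul_le_mul_of_nonneg_left h1 ha, mul_le_mul_of_nonneg_left h2 hb]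
  exact ne_top_of_le_ne_top (EReal.coe_ne_top _) key

lemma fdom_convex (f : H → EReal) (hf : ProperFn f) (hc : ConvexFn f) :
    Convex ℝ (fdom f) := by
  intro x hx y hy a b ha hb hab
  have hx' : ((x, (f x).toReal) : H × ℝ) ∈ {p : H × ℝ | f p.1 ≤ (p.2 : EReal)} := by
    simp only [Set.mem_setOf_eq]
    exact (EReal.coe_toReal hx (hf.1 x)).symm.le
  have hy' : ((y, (f y).toReal) : H × ℝ) ∈ {p : H × ℝ | f p.1 ≤ (p.2 : EReal)} := by
    simp only [Set.mem_setOf_eq]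
    exact (EReal.coe_toReal hy (hf.1 y)).symm.le
  have hcomb := hc hx' hy' ha hb hab
  simp only [Prod.smul_mk, Prod.mk_add_mk, Set.mem_setOf_eq, smul_eq_mul] at hcomb
  exact ne_top_of_le_ne_top (EReal.coe_ne_top _) hcomb

lemma shift_mem (f : H → EReal) (hf : ProperFn f) {a : H} {c : ℝ}
    (hbar : ∀ x ∈ fdom f, ⟪x, a⟫_ℝ ≤ c)
    {w : H} (hw : w ∈ fdom (fconj f)) {t : ℝ} (ht : 0 ≤ t) :
    w + t • a ∈ fdom (fconj f) := by
  have key : fconj f (w + t • a) ≤ (((fconj f w).toReal + t * c : ℝ) : EReal) := by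
    refine fconj_le_of_forall f hf _ _ (fun x hx => ?_)
    have h1 := inner_sub_toReal_le f hf hw x hx
    have h2 := hbar x hx
    have hin : ⟪x, w + t • a⟫_ℝ = ⟪x, w⟫_ℝ + t * ⟪x, a⟫_ℝ := by
      rw [inner_add_right, real_inner_smul_right]
    rw [hin]; nlinarith
  exact ne_top_of_le_ne_top (EReal.coe_ne_top _) key

lemma minNorm_inner {S : Set H} (hS : Convex ℝ S) {v : H} (hv : IsMinNormPoint S v) :
    ∀ w ∈ S, 0 ≤ ⟪v, w⟫_ℝ := by
  haveI : Nonempty S := ⟨⟨v, hv.1⟩⟩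
  have heq : ‖(0 : H) - v‖ = ⨅ w : S, ‖(0 : H) - (w : H)‖ := by
    apply le_antisymm
    · exact le_ciInf fun w => by simpa using hv.2 w w.2
    · refine ciInf_le ⟨0, ?_⟩ (⟨v, hv.1⟩ : S)
      rintro r ⟨w, rfl⟩
      exact norm_nonneg _
  intro w hw
  have h0 := (norm_eq_iInf_iff_real_inner_le_zero hS hv.1).mp heq w hw
  have hexp : ⟪(0 : H) - v, w - v⟫_ℝ = -⟪v, w⟫_ℝ + ⟪v, v⟫_ℝ := by
    simp [inner_sub_left, inner_sub_right]
  rw [hexp] at h0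
  nlinarith [(real_inner_self_nonneg : (0:ℝ) ≤ ⟪v, v⟫_ℝ)]

lemma aux_rec (f : H → EReal) (hf_prop : ProperFn f) (hf_cvx : ConvexFn f)
    (vD w1 w2 : H) (hw1 : w1 ∈ fdom (fconj f))
    (hpos : ∀ u ∈ fdom (fconj f), 0 ≤ ⟪vD, u + w2⟫_ℝ) :
    -vD ∈ recCone (closure (fdom f)) := by
  intro y hy
  by_contra hc
  have hCconv : Convex ℝ (closure (fdom f)) := (fdom_convex f hf_prop hf_cvx).closure
  obtain ⟨φ, u, hxu, hub⟩ := geometric_hahn_banach_point_closed hCconv isClosed_closure hc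
  set a : H := (InnerProductSpace.toDual ℝ H).symm φ with ha
  have hrep : ∀ z : H, ⟪z, a⟫_ℝ = φ z := fun z => by
    rw [real_inner_comm]; exact InnerProductSpace.toDual_symm_apply
  have hya : u < ⟪y, a⟫_ℝ := by rw [hrep]; exact hub y hy
  have hxa : ⟪-vD + y, a⟫_ℝ < u := by rw [hrep]; exact hxu
  have hexp : ⟪-vD + y, a⟫_ℝ = -⟪vD, a⟫_ℝ + ⟪y, a⟫_ℝ := by
    rw [inner_add_left, inner_neg_left]
  have hvda : 0 < ⟪vD, a⟫_ℝ := by rw [hexp] at hxa; linarith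
  have hbar : ∀ x ∈ fdom f, ⟪x, -a⟫_ℝ ≤ -u := fun x hx => by
    have h1 : u < φ x := hub x (subset_closure hx)
    rw [inner_neg_right, hrep]; linarith
  set c0 := ⟪vD, w1 + w2⟫_ℝ with hc0def
  have hc0 : 0 ≤ c0 := hpos w1 hw1
  set t := (c0 + 1) / ⟪vD, a⟫_ℝ with htdef
  have ht : 0 ≤ t := by positivity
  have hmem : w1 + t • (-a) ∈ fdom (fconj f) := shift_mem f hf_prop hbar hw1 ht
  have hfin := hpos _ hmem
  rw [inner_add_right, inner_add_right, real_inner_smul_right, inner_neg_right] at hfin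
  have hc0' : c0 = ⟪vD, w1⟫_ℝ + ⟪vD, w2⟫_ℝ := by rw [hc0def, inner_add_right]
  have htv : t * ⟪vD, a⟫_ℝ = c0 + 1 := div_mul_cancel₀ _ (ne_of_gt hvda)
  nlinarith [htv, hc0', hfin]

end Helpers

theorem neg_vD_mem_recCones {H : Type*} [NormedAddCommGroup H] [InnerProductSpace ℝ H]
    [FiniteDimensional ℝ H]
    (f g : H → EReal)
    (hf_prop : ProperFn f) (hf_lsc : LowerSemicontinuous f) (hf_cvx : ConvexFn f)
    (hg_prop : ProperFn g) (hg_lsc : LowerSemicontinuous g) (hg_cvx : ConvexFn g)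
    (vD : H) (hvD : IsMinNormPoint (closure (fdom (fconj f) + fdom (fconj g))) vD)
    : -vD ∈ recCone (closure (fdom f)) ∩ recCone (closure (fdom g)) := by
  have hconvD : Convex ℝ (closure (fdom (fconj f) + fdom (fconj g))) :=
    ((fdom_fconj_convex f hf_prop).add (fdom_fconj_convex g hg_prop)).closure
  have hpos0 : ∀ w ∈ closure (fdom (fconj f) + fdom (fconj g)), 0 ≤ ⟪vD, w⟫_ℝ :=
    minNorm_inner hconvD hvD
  have hne : (fdom (fconj f) + fdom (fconj g)).Nonempty :=
    closure_nonempty_iff.mp ⟨vD, hvD.1⟩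
  obtain ⟨w0, hw0⟩ := hne
  rw [Set.mem_add] at hw0
  obtain ⟨w1, hw1, w2, hw2, rfl⟩ := hw0
  constructor
  · exact aux_rec f hf_prop hf_cvx vD w1 w2 hw1
      (fun u hu => hpos0 _ (subset_closure (Set.add_mem_add hu hw2)))
  · refine aux_rec g hg_prop hg_cvx vD w2 w1 hw2 (fun u hu => ?_)
    have h := hpos0 _ (subset_closure (Set.add_mem_add hw1 hu))
    rwa [add_comm] at h

end
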